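/- Let 𝒫_n be a nonempty subset of S_n (n ≥ 2) that is a union of conjugacy classes, with average number of fixed points f_n, and let I ⊆ [n] with |I| = k. Then the number of φ ∈ 𝒫_n with φ(I) ∩ I ≠ ∅ is at most |𝒫_n| · k·(n(k−1)+f_n(n−k))/(n(n−1)). -/

import Mathlib

/-- The average number of fixed points of the members of a set `P` of permutations
of `[n]`. -/
noncomputable def avgFix {n : ℕ} (P : Finset (Equiv.Perm (Fin n))) : ℝ :=
  (∑ φ ∈ P, (Nat.card {t : Fin n // φ t = t} : ℝ)) / (P.card : ℝ)


lemma conj_filter_card {n : ℕ} (P : Finset (Equiv.Perm (Fin n)))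
    (hconj : ∀ φ ∈ P, ∀ ψ : Equiv.Perm (Fin n), ψ * φ * ψ⁻¹ ∈ P)
    (ψ : Equiv.Perm (Fin n)) (t s : Fin n) :
    (P.filter fun φ => φ t = s).card = (P.filter fun φ => φ (ψ t) = ψ s).card := by
  classical
  apply Finset.card_bij' (fun φ _ => ψ * φ * ψ⁻¹) (fun φ _ => ψ⁻¹ * φ * ψ)
  · intro φ hφ
    simp only [Finset.mem_filter] at hφ ⊢
    exact ⟨hconj φ hφ.1 ψ, by simp [Equiv.Perm.mul_apply, hφ.2]⟩
  · intro φ hφ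
    simp only [Finset.mem_filter] at hφ ⊢
    constructor
    · have := hconj φ hφ.1 ψ⁻¹; simpa using this
    · simp [Equiv.Perm.mul_apply, hφ.2]
  · intro φ _ ; group
  · intro φ _ ; group

lemma exists_pair_perm {n : ℕ} (o l t s : Fin n) (hol : o ≠ l) (hts : t ≠ s) :
    ∃ ψ : Equiv.Perm (Fin n), ψ o = t ∧ ψ l = s := by
  classical
  set ψ1 := Equiv.swap o t
  have h1 : ψ1 o = t := Equiv.swap_apply_left o t
  set u := ψ1 l
  have hut : u ≠ t := by
    intro h
    apply hol (ψ1.injective ?_)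
    rw [h1]; exact h.symm
  refine ⟨Equiv.swap u s * ψ1, ?_, ?_⟩
  · simp only [Equiv.Perm.mul_apply, h1]
    rw [Equiv.swap_apply_of_ne_of_ne (Ne.symm hut) hts]
  · simp only [Equiv.Perm.mul_apply]
    exact Equiv.swap_apply_left u s

/-- Let `𝒫_n` be a nonempty subset of `S_n` (`n ≥ 2`) closed under
conjugation, with average number of fixed points `f_n`, and `I ⊆ [n]` with `|I| = k`.
Then the number of `φ ∈ 𝒫_n` with `φ(I) ∩ I ≠ ∅` is at most
`|𝒫_n| · k·(n(k−1)+f_n(n−k))/(n(n−1))`. -/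
theorem conjClosed_hit_set_bound (n k : ℕ) (hn : 2 ≤ n)
    (P : Finset (Equiv.Perm (Fin n))) (hne : P.Nonempty)
    (hconj : ∀ φ ∈ P, ∀ ψ : Equiv.Perm (Fin n), ψ * φ * ψ⁻¹ ∈ P)
    (I : Finset (Fin n)) (hI : I.card = k) :
    (Nat.card {φ : Equiv.Perm (Fin n) // φ ∈ P ∧ ∃ t ∈ I, φ t ∈ I} : ℝ) ≤
      (P.card : ℝ) *
        ((k : ℝ) * (((n : ℝ) * ((k : ℝ) - 1) + avgFix P * ((n : ℝ) - (k : ℝ))) /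
          ((n : ℝ) * ((n : ℝ) - 1)))) := by
  classical
  set o : Fin n := ⟨0, by omega⟩ with ho
  set l : Fin n := ⟨1, by omega⟩ with hl
  have hol : o ≠ l := by simp [ho, hl, Fin.ext_iff]
  set A : ℕ := (P.filter fun φ => φ o = o).card with hA
  set B : ℕ := (P.filter fun φ => φ o = l).card with hB
  -- diagonal counts all equal A
  have hdiag : ∀ t : Fin n, (P.filter fun φ => φ t = t).card = A := by
    intro t
    have := conj_filter_card P hconj (Equiv.swap o t) o o
    rw [Equiv.swap_apply_left] at this
    exact this.symm.trans hA.symm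
  -- off-diagonal counts all equal B
  have hoff : ∀ t s : Fin n, t ≠ s → (P.filter fun φ => φ t = s).card = B := by
    intro t s hts
    obtain ⟨ψ, hψo, hψl⟩ := exists_pair_perm o l t s hol hts
    have := conj_filter_card P hconj ψ o l
    rw [hψo, hψl] at this
    exact this.symm
  -- hit set count
  set hit : Finset (Equiv.Perm (Fin n)) := P.filter (fun φ => ∃ t ∈ I, φ t ∈ I) with hhit
  have hcard : Nat.card {φ : Equiv.Perm (Fin n) // φ ∈ P ∧ ∃ t ∈ I, φ t ∈ I} = hit.card := by
    rw [Nat.card_eq_fintype_card, Fintype.card_subtype]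
    congr 1
    ext φ
    simp [hhit]
  -- fiberwise: for t, card of {φ ∈ P : φ t ∈ I} = ∑ s∈I, Nc t s
  have hfiber : ∀ t : Fin n, (P.filter fun φ => φ t ∈ I).card
      = ∑ s ∈ I, (P.filter fun φ => φ t = s).card := by
    intro t
    rw [Finset.card_eq_sum_card_fiberwise (f := fun φ => φ t) (t := I)
      (by intro φ hφ; exact (Finset.mem_filter.mp hφ).2)]
    apply Finset.sum_congr rfl
    intro s hs
    congr 1
    rw [Finset.filter_filter]
    apply Finset.filter_congr
    intro φ _
    constructor
    · exact fun h => h.2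
    · exact fun h => ⟨h ▸ hs, h⟩
  -- sum over s ∈ I for t ∈ I
  have hrow : ∀ t ∈ I, ∑ s ∈ I, (P.filter fun φ => φ t = s).card = A + (k-1) * B := by
    intro t ht
    rw [← Finset.sum_erase_add I _ ht, hdiag t]
    have : ∑ s ∈ I.erase t, (P.filter fun φ => φ t = s).card = (k-1) * B := by
      rw [Finset.sum_congr rfl (fun s hs => hoff t s (Ne.symm (Finset.ne_of_mem_erase hs)))]
      rw [Finset.sum_const, Finset.card_erase_of_mem ht, hI, smul_eq_mul]
    rw [this]; ring
  -- hit card bound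
  have hbound : hit.card ≤ k * (A + (k-1) * B) := by
    have hsub : hit ⊆ I.biUnion (fun t => P.filter fun φ => φ t ∈ I) := by
      intro φ hφ
      rw [Finset.mem_filter] at hφ
      obtain ⟨hφP, t, ht, hφt⟩ := hφ
      exact Finset.mem_biUnion.mpr ⟨t, ht, Finset.mem_filter.mpr ⟨hφP, hφt⟩⟩
    calc hit.card ≤ (I.biUnion (fun t => P.filter fun φ => φ t ∈ I)).card :=
          Finset.card_le_card hsub
      _ ≤ ∑ t ∈ I, (P.filter fun φ => φ t ∈ I).card := Finset.card_biUnion_le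
      _ = ∑ t ∈ I, (A + (k-1) * B) := by
          apply Finset.sum_congr rfl; intro t ht; rw [hfiber t, hrow t ht]
      _ = k * (A + (k-1) * B) := by rw [Finset.sum_const, hI, smul_eq_mul]
  -- total fixed points = n * A
  have hfixsum : ∑ φ ∈ P, (Nat.card {t : Fin n // φ t = t}) = n * A := by
    have h1 : ∀ φ : Equiv.Perm (Fin n), (Nat.card {t : Fin n // φ t = t})
        = (Finset.univ.filter fun t : Fin n => φ t = t).card := by
      intro φ; rw [Nat.card_eq_fintype_card, Fintype.card_subtype]
    calc ∑ φ ∈ P, (Nat.card {t : Fin n // φ t = t})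
        = ∑ φ ∈ P, (Finset.univ.filter fun t : Fin n => φ t = t).card := by
          exact Finset.sum_congr rfl (fun φ _ => h1 φ)
      _ = ∑ φ ∈ P, ∑ t : Fin n, if φ t = t then 1 else 0 :=
          Finset.sum_congr rfl (fun φ _ => Finset.card_filter _ _)
      _ = ∑ t : Fin n, ∑ φ ∈ P, if φ t = t then 1 else 0 := Finset.sum_comm
      _ = ∑ t : Fin n, (P.filter fun φ => φ t = t).card :=
          Finset.sum_congr rfl (fun t _ => (Finset.card_filter _ _).symm)
      _ = ∑ t : Fin n, A := Finset.sum_congr rfl (fun t _ => hdiag t)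
      _ = n * A := by simp [mul_comm]
  -- P.card = A + (n-1) * B
  have hPcard : P.card = A + (n-1) * B := by
    rw [Finset.card_eq_sum_card_fiberwise (f := fun φ => φ o) (t := Finset.univ)
      (by intro φ _; exact Finset.mem_univ _)]
    rw [← Finset.sum_erase_add Finset.univ _ (Finset.mem_univ o), hdiag o]
    have : ∑ s ∈ Finset.univ.erase o, (P.filter fun φ => φ o = s).card = (n-1) * B := by
      rw [Finset.sum_congr rfl (fun s hs => hoff o s (Ne.symm (Finset.ne_of_mem_erase hs)))]
      rw [Finset.sum_const, Finset.card_erase_of_mem (Finset.mem_univ o), Finset.card_univ,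
        Fintype.card_fin, smul_eq_mul]
    rw [this]; ring
  -- now real algebra
  rw [hcard]
  have hP0 : (0:ℝ) < (P.card : ℝ) := by
    exact_mod_cast Finset.card_pos.mpr hne
  have hn0 : (0:ℝ) < (n:ℝ) := by positivity
  have hn1 : (0:ℝ) < (n:ℝ) - 1 := by
    have : (2:ℝ) ≤ (n:ℝ) := by exact_mod_cast hn
    linarith
  have havg : avgFix P * (P.card : ℝ) = (n:ℝ) * (A:ℝ) := by
    rw [avgFix, div_mul_cancel₀ _ (ne_of_gt hP0)]
    rw [← Nat.cast_sum, hfixsum]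
    push_cast; ring
  have hPc : (P.card : ℝ) = (A:ℝ) + ((n:ℝ)-1) * (B:ℝ) := by
    have hc : ((n-1 : ℕ):ℝ) = (n:ℝ) - 1 := Nat.cast_pred (by omega)
    rw [hPcard, Nat.cast_add, Nat.cast_mul, hc]
  rcases Nat.eq_zero_or_pos k with hk | hk
  · subst hk
    have h0 : hit.card = 0 := Nat.le_zero.mp (by simpa using hbound)
    rw [h0]
    simp
  · have hkB : ((k-1 : ℕ):ℝ) = (k:ℝ) - 1 := by
      rw [Nat.cast_pred hk]
    have step1 : (hit.card : ℝ) ≤ (k:ℝ) * ((A:ℝ) + ((k:ℝ)-1) * (B:ℝ)) := by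
      have := hbound
      calc (hit.card : ℝ) ≤ ((k * (A + (k-1) * B) : ℕ) : ℝ) := by exact_mod_cast this
        _ = (k:ℝ) * ((A:ℝ) + ((k:ℝ)-1) * (B:ℝ)) := by push_cast [hkB]; ring
    refine step1.trans_eq ?_
    have hD : (n:ℝ) * ((n:ℝ)-1) ≠ 0 := by positivity
    rw [eq_comm]
    field_simp
    linear_combination ((n:ℝ)-(k:ℝ)) * havg + ((n:ℝ)*((k:ℝ)-1)) * hPc
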